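/- arXiv:1408.1609 — 4 statements merged into one kernel-verified Lean document; each statement's English description precedes it below -/
import Mathlib

section
/- Let p = (p_i)_{i∈ℕ} and q = (q_i)_{i∈ℕ} be sequences of nonnegative reals with Σ_i p_i = Σ_i q_i = 1, and let H(p) = −Σ_{i∈ℕ} p_i ln p_i and H(q) = −Σ_{i∈ℕ} q_i ln q_i (with the convention 0 ln 0 = 0). If for some constant c ∈ (0, 1/3) one has |p_i − q_i| ≤ c q_i for all i ∈ ℕ, then H(p) ≤ (1 + c) H(q) + c ln 3. -/
open scoped ENNReal

lemma aux_log3 : (1 : ℝ) ≤ Real.log 3 := by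
  rw [Real.le_log_iff_exp_le (by norm_num)]
  calc Real.exp 1 ≤ 2.7182818286 := Real.exp_one_lt_d9.le
    _ ≤ 3 := by norm_num

lemma aux_key (c : ℝ) (hc : 0 < c) (hc3 : c < 1 / 3) (a b : ℝ) (ha : 0 ≤ a)
    (hb0 : 0 ≤ b) (hb1 : b ≤ 1) (h : |a - b| ≤ c * b) :
    Real.negMulLog a ≤ (1 + c) * Real.negMulLog b + (c * Real.log 3) * b := by
  rcases eq_or_lt_of_le hb0 with hb | hb
  · have hb' : b = 0 := hb.symm
    have ha0 : a = 0 := by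
      have := h
      rw [hb', mul_zero, sub_zero, abs_le] at this
      linarith [this.1, this.2]
    simp [ha0, hb', Real.negMulLog]
  · set t := a / b with ht
    have hbne : b ≠ 0 := ne_of_gt hb
    have hab : a = b * t := by rw [ht]; field_simp
    have htc : |t - 1| ≤ c := by
      have heq : |t - 1| = |a - b| / b := by
        rw [ht, div_sub_one hbne, abs_div, abs_of_pos hb]
      rw [heq, div_le_iff₀ hb]
      exact h
    have ht1 : 1 - c ≤ t := by
      have := (abs_le.mp htc).1; linarith
    have ht2 : t ≤ 1 + c := by
      have := (abs_le.mp htc).2; linarith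
    have htpos : 0 < t := by linarith
    have hnq : 0 ≤ Real.negMulLog b := Real.negMulLog_nonneg hb0 hb1
    rw [hab, Real.negMulLog_mul]
    have h1 : t * Real.negMulLog b ≤ (1 + c) * Real.negMulLog b :=
      mul_le_mul_of_nonneg_right ht2 hnq
    have h2 : Real.negMulLog t ≤ c * Real.log 3 := by
      have hlog : Real.log (1 / t) ≤ 1 / t - 1 := Real.log_le_sub_one_of_pos (by positivity)
      have : Real.negMulLog t ≤ 1 - t := by
        rw [Real.negMulLog, neg_mul]
        have : t * Real.log (1 / t) ≤ t * (1 / t - 1) :=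
          mul_le_mul_of_nonneg_left hlog htpos.le
        rw [Real.log_div one_ne_zero (ne_of_gt htpos), Real.log_one, zero_sub, mul_neg,
          mul_sub, mul_one_div, div_self (ne_of_gt htpos)] at this
        linarith
      have hc' : 1 - t ≤ c := by linarith
      have : Real.negMulLog t ≤ c := le_trans this hc'
      calc Real.negMulLog t ≤ c := this
        _ = c * 1 := (mul_one c).symm
        _ ≤ c * Real.log 3 := mul_le_mul_of_nonneg_left aux_log3 hc.le
    have h3 : b * Real.negMulLog t ≤ b * (c * Real.log 3) :=
      mul_le_mul_of_nonneg_left h2 hb0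
    calc t * Real.negMulLog b + b * Real.negMulLog t
        ≤ (1 + c) * Real.negMulLog b + b * (c * Real.log 3) := add_le_add h1 h3
      _ = (1 + c) * Real.negMulLog b + (c * Real.log 3) * b := by ring

/-- If `p, q` are probability vectors on `ℕ` and for some
`c ∈ (0, 1/3)` one has `|p i - q i| ≤ c * q i` for all `i`, then the Shannon
entropies (computed in `ℝ≥0∞`, since they may be infinite) satisfy
`H(p) ≤ (1 + c) * H(q) + c * ln 3`. -/
theorem entropy_le_of_close (p q : ℕ → ℝ) (hp : ∀ i, 0 ≤ p i) (hq : ∀ i, 0 ≤ q i)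
    (hps : HasSum p 1) (hqs : HasSum q 1)
    (c : ℝ) (hc : 0 < c) (hc3 : c < 1 / 3)
    (hpq : ∀ i, |p i - q i| ≤ c * q i) :
    (∑' i, ENNReal.ofReal (Real.negMulLog (p i))) ≤
      (1 + ENNReal.ofReal c) * (∑' i, ENNReal.ofReal (Real.negMulLog (q i))) +
        ENNReal.ofReal (c * Real.log 3) := by
  have hq1 : ∀ i, q i ≤ 1 := fun i => le_hasSum hqs i (fun j _ => hq j)
  have hln3 : 0 ≤ Real.log 3 := le_trans zero_le_one aux_log3
  have key : ∀ i, ENNReal.ofReal (Real.negMulLog (p i)) ≤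
      (1 + ENNReal.ofReal c) * ENNReal.ofReal (Real.negMulLog (q i)) +
        ENNReal.ofReal (c * Real.log 3) * ENNReal.ofReal (q i) := by
    intro i
    have hk := aux_key c hc hc3 (p i) (q i) (hp i) (hq i) (hq1 i) (hpq i)
    have hnq : 0 ≤ Real.negMulLog (q i) := Real.negMulLog_nonneg (hq i) (hq1 i)
    calc ENNReal.ofReal (Real.negMulLog (p i))
        ≤ ENNReal.ofReal ((1 + c) * Real.negMulLog (q i) + (c * Real.log 3) * q i) :=
          ENNReal.ofReal_le_ofReal hk
      _ ≤ ENNReal.ofReal ((1 + c) * Real.negMulLog (q i)) +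
            ENNReal.ofReal ((c * Real.log 3) * q i) := ENNReal.ofReal_add_le
      _ = (1 + ENNReal.ofReal c) * ENNReal.ofReal (Real.negMulLog (q i)) +
            ENNReal.ofReal (c * Real.log 3) * ENNReal.ofReal (q i) := by
          rw [ENNReal.ofReal_mul (by positivity), ENNReal.ofReal_mul (by positivity),
            ENNReal.ofReal_add zero_le_one hc.le, ENNReal.ofReal_one]
  calc (∑' i, ENNReal.ofReal (Real.negMulLog (p i)))
      ≤ ∑' i, ((1 + ENNReal.ofReal c) * ENNReal.ofReal (Real.negMulLog (q i)) +
          ENNReal.ofReal (c * Real.log 3) * ENNReal.ofReal (q i)) :=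
        ENNReal.tsum_le_tsum key
    _ = (1 + ENNReal.ofReal c) * (∑' i, ENNReal.ofReal (Real.negMulLog (q i))) +
          ENNReal.ofReal (c * Real.log 3) * (∑' i, ENNReal.ofReal (q i)) := by
        rw [ENNReal.tsum_add, ENNReal.tsum_mul_left, ENNReal.tsum_mul_left]
    _ = (1 + ENNReal.ofReal c) * (∑' i, ENNReal.ofReal (Real.negMulLog (q i))) +
          ENNReal.ofReal (c * Real.log 3) := by
        have : (∑' i, ENNReal.ofReal (q i)) = 1 := by
          rw [← ENNReal.ofReal_tsum_of_nonneg hq hqs.summable, hqs.tsum_eq,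
            ENNReal.ofReal_one]
        rw [this, mul_one]
end

section
/- Let η be a countable measurable partition of a measurable space (X, 𝓕), and let μ and ν be probability measures on (X, 𝓕). If for some constant c ∈ (0, 1/3) one has |μ(A) − ν(A)| ≤ c ν(A) for every atom A of η, then the partition entropies satisfy H_μ(η) ≤ (1 + c) H_ν(η) + c ln 3, where H_μ(η) = −Σ_{A ∈ η} μ(A) ln μ(A) with the convention 0 ln 0 = 0. -/
open MeasureTheory Set
open scoped ENNReal

/-- A countable measurable partition of `X`, encoded as an `ℕ`-indexed family of
pairwise disjoint measurable sets covering `X`. -/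
def IsCountablePartition {X : Type*} [MeasurableSpace X] (η : ℕ → Set X) : Prop :=
  (∀ i, MeasurableSet (η i)) ∧ Pairwise (Function.onFun Disjoint η) ∧ (⋃ i, η i) = Set.univ

/-- The entropy `H_μ(η) = -∑_A μ(A) log μ(A)` of a countable family of sets,
computed in `ℝ≥0∞` since it may be infinite (`0 log 0 = 0` by convention). -/
noncomputable def partEntropy {X ι : Type*} [MeasurableSpace X]
    (μ : Measure X) (η : ι → Set X) : ℝ≥0∞ :=
  ∑' i, ENNReal.ofReal (Real.negMulLog (μ (η i)).toReal)

lemma negMulLog_le_one_sub {x : ℝ} (hx : 0 < x) : Real.negMulLog x ≤ 1 - x := by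
  have h := Real.log_le_sub_one_of_pos (x := x⁻¹) (by positivity)
  have : Real.negMulLog x = x * Real.log x⁻¹ := by
    rw [Real.log_inv]; ring_nf; rw [Real.negMulLog]; ring
  rw [this]
  calc x * Real.log x⁻¹ ≤ x * (x⁻¹ - 1) := by
        exact mul_le_mul_of_nonneg_left h hx.le
    _ = 1 - x := by field_simp

lemma key_ineq {c p q : ℝ} (hc : 0 < c) (hp0 : 0 ≤ p) (hq1 : q ≤ 1)
    (h : |p - q| ≤ c * q) :
    Real.negMulLog p ≤ (1 + c) * Real.negMulLog q + c * q := by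
  have hq0 : 0 ≤ q := by
    by_contra hq
    push_neg at hq
    have := (abs_nonneg (p - q)).trans h
    nlinarith
  rcases eq_or_lt_of_le hq0 with hq | hq
  · have hp : p = 0 := by
      rw [abs_le] at h
      nlinarith
    simp [hp, ← hq]
  rw [abs_le] at h
  have hub : p ≤ (1 + c) * q := by nlinarith
  have hlb : (1 - c) * q ≤ p := by nlinarith
  rcases eq_or_lt_of_le hp0 with hp | hp
  · rw [← hp, Real.negMulLog_zero]
    have := Real.negMulLog_nonneg hq0 hq1
    positivity
  -- p > 0, q > 0
  have hlogq : Real.log q ≤ 0 := Real.log_nonpos hq0 hq1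
  have hsplit : Real.negMulLog p = -p * Real.log q + q * Real.negMulLog (p / q) := by
    rw [Real.negMulLog, Real.negMulLog, Real.log_div hp.ne' hq.ne']
    field_simp
    ring
  rw [hsplit]
  have h1 : -p * Real.log q ≤ (1 + c) * Real.negMulLog q := by
    rw [Real.negMulLog]
    nlinarith [mul_le_mul_of_nonneg_right hub (neg_nonneg.2 hlogq)]
  have h2 : q * Real.negMulLog (p / q) ≤ c * q := by
    have hpq : (0:ℝ) < p / q := by positivity
    have := negMulLog_le_one_sub hpq
    have hge : 1 - c ≤ p / q := (le_div_iff₀ hq).2 (by nlinarith)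
    nlinarith
  linarith


/-- If `μ, ν` are probability measures, `η` is a countable
measurable partition, `c ∈ (0, 1/3)`, and `|μ(A) - ν(A)| ≤ c ν(A)` for every atom
`A` of `η`, then `H_μ(η) ≤ (1 + c) H_ν(η) + c ln 3`. -/
theorem partEntropy_le_of_close {X : Type*} [MeasurableSpace X]
    (η : ℕ → Set X) (hpart : IsCountablePartition η)
    (μ ν : Measure X) [IsProbabilityMeasure μ] [IsProbabilityMeasure ν]
    (c : ℝ) (hc : 0 < c) (hc3 : c < 1 / 3)
    (hatoms : ∀ i, |(μ (η i)).toReal - (ν (η i)).toReal| ≤ c * (ν (η i)).toReal) :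
    partEntropy μ η ≤ (1 + ENNReal.ofReal c) * partEntropy ν η +
      ENNReal.ofReal (c * Real.log 3) := by
  obtain ⟨hmeas, hdisj, huniv⟩ := hpart
  set p : ℕ → ℝ := fun i => (μ (η i)).toReal with hp
  set q : ℕ → ℝ := fun i => (ν (η i)).toReal with hq
  have hq1 : ∀ i, q i ≤ 1 := fun i => by
    have h := prob_le_one (μ := ν) (s := η i)
    simpa [hq] using ENNReal.toReal_mono ENNReal.one_ne_top h
  have hatom : ∀ i, ENNReal.ofReal (Real.negMulLog (p i)) ≤
      (1 + ENNReal.ofReal c) * ENNReal.ofReal (Real.negMulLog (q i)) +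
      ENNReal.ofReal c * ν (η i) := by
    intro i
    have hkey := key_ineq hc ENNReal.toReal_nonneg (hq1 i) (hatoms i)
    have hq0 : 0 ≤ q i := ENNReal.toReal_nonneg
    have hnq : 0 ≤ Real.negMulLog (q i) := Real.negMulLog_nonneg hq0 (hq1 i)
    calc ENNReal.ofReal (Real.negMulLog (p i))
        ≤ ENNReal.ofReal ((1 + c) * Real.negMulLog (q i) + c * q i) :=
          ENNReal.ofReal_le_ofReal hkey
      _ = ENNReal.ofReal ((1 + c) * Real.negMulLog (q i)) + ENNReal.ofReal (c * q i) :=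
          ENNReal.ofReal_add (by positivity) (by positivity)
      _ = (1 + ENNReal.ofReal c) * ENNReal.ofReal (Real.negMulLog (q i)) +
          ENNReal.ofReal c * ν (η i) := by
          rw [ENNReal.ofReal_mul (by positivity), ENNReal.ofReal_mul hc.le,
            ENNReal.ofReal_add zero_le_one hc.le, ENNReal.ofReal_one,
            ENNReal.ofReal_toReal (measure_ne_top ν _)]
  have hsum : ∑' i, ν (η i) = 1 := by
    rw [← measure_iUnion hdisj hmeas, huniv, measure_univ]
  calc partEntropy μ η
      ≤ ∑' i, ((1 + ENNReal.ofReal c) * ENNReal.ofReal (Real.negMulLog (q i)) +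
          ENNReal.ofReal c * ν (η i)) := ENNReal.tsum_le_tsum hatom
    _ = (1 + ENNReal.ofReal c) * partEntropy ν η + ENNReal.ofReal c * ∑' i, ν (η i) := by
        rw [ENNReal.tsum_add, ENNReal.tsum_mul_left, ENNReal.tsum_mul_left]; rfl
    _ ≤ (1 + ENNReal.ofReal c) * partEntropy ν η + ENNReal.ofReal (c * Real.log 3) := by
        rw [hsum, mul_one]
        gcongr
        have h3 : (1:ℝ) ≤ Real.log 3 := by
          rw [Real.le_log_iff_exp_le (by norm_num)]
          calc Real.exp 1 ≤ 2.7182818286 := Real.exp_one_lt_d9.le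
            _ ≤ 3 := by norm_num
        nlinarith
end

section
/- Let T be an automorphism of a measurable space (X, 𝓕), let ξ be a countable measurable partition of X, let μ₀ and μ be T-invariant probability measures, let r ∈ ℕ, r ≥ 1, and let ε be a real number with 0 < ε ≤ 1/6. If |μ₀(A) − μ(A)| ≤ ε μ(A) for every atom A of the partition ⋁_{i=0}^{r} T^{-i} ξ, then H_μ(⋁_{i=1}^{r} T^{-i} ξ) ≤ (1 + 2ε) H_{μ₀}(⋁_{i=1}^{r} T^{-i} ξ) + 2ε ln 3. -/
open MeasureTheory Set
open scoped ENNReal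

/-- The atom of the refinement `⋁_{i=k}^{k+r-1} T⁻ⁱ ξ` labelled by the word
`f : Fin r → ℕ`, namely `⋂_j T^{-(k+j)} ξ_{f j}`. -/
def joinAtom {X : Type*} (T : X → X) (ξ : ℕ → Set X) (k r : ℕ) (f : Fin r → ℕ) : Set X :=
  ⋂ j : Fin r, (T^[k + (j : ℕ)]) ⁻¹' (ξ (f j))


section Aux

variable {X : Type*} [MeasurableSpace X]

private lemma perAtom {a b ε : ℝ} (hε : 0 < ε) (hε6 : ε ≤ 1/6)
    (ha0 : 0 ≤ a) (ha1 : a ≤ 1) (hb0 : 0 ≤ b)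
    (hc : |a - b| ≤ ε * b) :
    Real.negMulLog b ≤ (1 + 2*ε) * Real.negMulLog a + 2 * ε * Real.log 3 * a := by
  have h3 : (1:ℝ) ≤ Real.log 3 := by
    rw [← Real.log_exp 1]
    exact Real.log_le_log (Real.exp_pos 1) (by linarith [Real.exp_one_lt_d9])
  rcases eq_or_lt_of_le hb0 with hb | hb
  · have hc' := abs_le.mp hc
    have ha : a = 0 := by nlinarith [hc'.1, hc'.2]
    simp [ha, ← hb, Real.negMulLog]
  have hc' := abs_le.mp hc
  have hab1 : (1-ε)*b ≤ a := by linarith [hc'.1]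
  have hab2 : a ≤ (1+ε)*b := by linarith [hc'.2]
  have ha : 0 < a := lt_of_lt_of_le (by nlinarith) hab1
  have hba : b ≤ a / (1-ε) := by rw [le_div_iff₀ (by linarith)]; linarith
  have hab : a / (1+ε) ≤ b := by rw [div_le_iff₀ (by linarith)]; linarith
  have hlog : -Real.log b ≤ -Real.log a + Real.log (1+ε) := by
    have h1 : Real.log (a / (1+ε)) ≤ Real.log b := Real.log_le_log (by positivity) hab
    rw [Real.log_div ha.ne' (by linarith)] at h1
    linarith
  have hL : 0 ≤ -Real.log a := by simpa using Real.log_nonpos ha0 ha1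
  have hM0 : 0 ≤ Real.log (1+ε) := Real.log_nonneg (by linarith)
  have hMε : Real.log (1+ε) ≤ ε := by
    have := Real.log_le_sub_one_of_pos (x := 1+ε) (by linarith); linarith
  have step1 : Real.negMulLog b ≤ (a/(1-ε)) * (-Real.log a + Real.log (1+ε)) := by
    have hd : Real.negMulLog b = b * (-Real.log b) := by rw [Real.negMulLog]; ring
    rw [hd]
    calc b * (-Real.log b) ≤ b * (-Real.log a + Real.log (1+ε)) :=
          mul_le_mul_of_nonneg_left hlog hb0
      _ ≤ (a/(1-ε)) * (-Real.log a + Real.log (1+ε)) :=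
          mul_le_mul_of_nonneg_right hba (by linarith)
  have hnm : Real.negMulLog a = a * (-Real.log a) := by rw [Real.negMulLog]; ring
  rw [hnm]
  have hden : (0:ℝ) < 1 - ε := by linarith
  rw [div_mul_eq_mul_div, le_div_iff₀ hden] at step1
  rw [← mul_le_mul_iff_of_pos_right hden]
  have e1 : a * (-Real.log a) ≤ (1+2*ε)*(a * (-Real.log a))*(1-ε) := by
    nlinarith [mul_nonneg (mul_nonneg ha0 hL) (mul_nonneg hε.le (by linarith : (0:ℝ) ≤ 1 - 2*ε))]
  have e2 : a * Real.log (1+ε) ≤ 2*ε*Real.log 3*a*(1-ε) := by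
    nlinarith [mul_le_mul_of_nonneg_left hMε ha0,
      mul_nonneg (mul_nonneg hε.le ha0) (by linarith : (0:ℝ) ≤ Real.log 3 - 1),
      mul_nonneg (mul_nonneg hε.le ha0) (by linarith : (0:ℝ) ≤ Real.log 3)]
  nlinarith [step1]

private lemma joinAtom_measurable (T : X ≃ᵐ X) {ξ : ℕ → Set X} (h : ∀ i, MeasurableSet (ξ i))
    (k r : ℕ) (f : Fin r → ℕ) : MeasurableSet (joinAtom T ξ k r f) :=
  MeasurableSet.iInter fun j => (T.measurable.iterate (k + (j : ℕ))) (h (f j))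

private lemma joinAtom_disjoint (T : X ≃ᵐ X) {ξ : ℕ → Set X}
    (h : Pairwise (Function.onFun Disjoint ξ)) (k r : ℕ) :
    Pairwise (Function.onFun Disjoint (joinAtom T ξ k r)) := by
  intro f g hfg
  obtain ⟨j, hj⟩ := Function.ne_iff.mp hfg
  exact Disjoint.mono (Set.iInter_subset _ j) (Set.iInter_subset _ j)
    (Disjoint.preimage (T^[k + (j:ℕ)]) (h hj))

private lemma joinAtom_cons (T : X ≃ᵐ X) (ξ : ℕ → Set X) (r : ℕ) (f : Fin r → ℕ) (n : ℕ) :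
    joinAtom T ξ 0 (r+1) (Fin.cons n f) = ξ n ∩ joinAtom T ξ 1 r f := by
  ext x
  simp only [joinAtom, mem_iInter, mem_inter_iff, mem_preimage, Fin.forall_fin_succ,
    Fin.cons_zero, Fin.cons_succ, Fin.val_zero, Fin.val_succ, Nat.add_zero,
    Function.iterate_zero, id_eq]
  have he : ∀ i : ℕ, 0 + (i + 1) = 1 + i := by omega
  constructor
  · rintro ⟨h0, h1⟩
    exact ⟨h0, fun i => by rw [← he]; exact h1 i⟩
  · rintro ⟨h0, h1⟩
    exact ⟨h0, fun i => by rw [he]; exact h1 i⟩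

private lemma joinAtom_decomp (T : X ≃ᵐ X) {ξ : ℕ → Set X} (hcov : (⋃ i, ξ i) = univ)
    (r : ℕ) (f : Fin r → ℕ) :
    joinAtom T ξ 1 r f = ⋃ n, joinAtom T ξ 0 (r+1) (Fin.cons n f) := by
  have : (⋃ n, joinAtom T ξ 0 (r+1) (Fin.cons n f)) = ⋃ n, ξ n ∩ joinAtom T ξ 1 r f := by
    simp only [joinAtom_cons]
  rw [this, ← Set.iUnion_inter, hcov, univ_inter]

end Aux

/-- Let `T` be an automorphism of `(X, 𝓕)`, `ξ` a countable
measurable partition, `μ₀, μ` two `T`-invariant probability measures, `r ≥ 1`,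
and `0 < ε ≤ 1/6`. If `|μ₀(A) - μ(A)| ≤ ε μ(A)` for every atom `A` of
`⋁_{i=0}^{r} T⁻ⁱ ξ`, then
`H_μ(⋁_{i=1}^{r} T⁻ⁱ ξ) ≤ (1 + 2ε) H_{μ₀}(⋁_{i=1}^{r} T⁻ⁱ ξ) + 2ε ln 3`. -/
theorem join_partEntropy_le_of_close {X : Type*} [MeasurableSpace X]
    (T : X ≃ᵐ X) (ξ : ℕ → Set X) (hpart : IsCountablePartition ξ)
    (μ₀ μ : Measure X) [IsProbabilityMeasure μ₀] [IsProbabilityMeasure μ]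
    (hinv₀ : MeasurePreserving T μ₀ μ₀) (hinv : MeasurePreserving T μ μ)
    (r : ℕ) (hr : 1 ≤ r) (ε : ℝ) (hε : 0 < ε) (hε6 : ε ≤ 1 / 6)
    (hclose : ∀ f : Fin (r + 1) → ℕ,
      |(μ₀ (joinAtom T ξ 0 (r + 1) f)).toReal - (μ (joinAtom T ξ 0 (r + 1) f)).toReal|
        ≤ ε * (μ (joinAtom T ξ 0 (r + 1) f)).toReal) :
    partEntropy μ (joinAtom T ξ 1 r) ≤
      (1 + ENNReal.ofReal (2 * ε)) * partEntropy μ₀ (joinAtom T ξ 1 r) +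
        ENNReal.ofReal (2 * ε * Real.log 3) := by
  classical
  obtain ⟨hmeas, hdisj, hcov⟩ := hpart
  -- Step 1: transfer the closeness hypothesis to the coarser partition.
  have hclose' : ∀ f : Fin r → ℕ,
      |(μ₀ (joinAtom T ξ 1 r f)).toReal - (μ (joinAtom T ξ 1 r f)).toReal|
        ≤ ε * (μ (joinAtom T ξ 1 r f)).toReal := by
    intro f
    set g : ℕ → Set X := fun n => joinAtom T ξ 0 (r+1) (Fin.cons n f) with hg
    have hgm : ∀ n, MeasurableSet (g n) := fun n => joinAtom_measurable T hmeas _ _ _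
    have hgd : Pairwise (Function.onFun Disjoint g) := by
      intro m n hmn
      refine (joinAtom_disjoint T hdisj 0 (r+1)) ?_
      intro hcons
      exact hmn (by simpa using congrFun hcons 0)
    have hdec := joinAtom_decomp T hcov r f
    have hμ : μ (joinAtom T ξ 1 r f) = ∑' n, μ (g n) := by
      rw [hdec, measure_iUnion hgd hgm]
    have hμ₀ : μ₀ (joinAtom T ξ 1 r f) = ∑' n, μ₀ (g n) := by
      rw [hdec, measure_iUnion hgd hgm]
    have htμ : (μ (joinAtom T ξ 1 r f)).toReal = ∑' n, (μ (g n)).toReal := by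
      rw [hμ, ENNReal.tsum_toReal_eq (fun n => measure_ne_top μ _)]
    have htμ₀ : (μ₀ (joinAtom T ξ 1 r f)).toReal = ∑' n, (μ₀ (g n)).toReal := by
      rw [hμ₀, ENNReal.tsum_toReal_eq (fun n => measure_ne_top μ₀ _)]
    have sb : Summable (fun n => (μ (g n)).toReal) :=
      ENNReal.summable_toReal (by rw [← hμ]; exact measure_ne_top μ _)
    have sa : Summable (fun n => (μ₀ (g n)).toReal) :=
      ENNReal.summable_toReal (by rw [← hμ₀]; exact measure_ne_top μ₀ _)
    have sab : Summable (fun n => |(μ₀ (g n)).toReal - (μ (g n)).toReal|) :=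
      (sa.sub sb).abs
    rw [htμ, htμ₀, ← Summable.tsum_sub sa sb]
    calc |∑' n, ((μ₀ (g n)).toReal - (μ (g n)).toReal)|
        ≤ ∑' n, |(μ₀ (g n)).toReal - (μ (g n)).toReal| := by
          simpa using norm_tsum_le_tsum_norm (f := fun n => (μ₀ (g n)).toReal - (μ (g n)).toReal)
            (by simpa [Real.norm_eq_abs] using sab)
      _ ≤ ∑' n, ε * (μ (g n)).toReal := Summable.tsum_le_tsum (fun n => hclose _) sab (sb.mul_left ε)
      _ = ε * ∑' n, (μ (g n)).toReal := tsum_mul_left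
  -- Step 2: pointwise entropy bound.
  have key : ∀ f : Fin r → ℕ,
      ENNReal.ofReal (Real.negMulLog (μ (joinAtom T ξ 1 r f)).toReal) ≤
        ENNReal.ofReal (1 + 2*ε) *
            ENNReal.ofReal (Real.negMulLog (μ₀ (joinAtom T ξ 1 r f)).toReal)
          + ENNReal.ofReal (2*ε*Real.log 3) * μ₀ (joinAtom T ξ 1 r f) := by
    intro f
    have h1 := perAtom (a := (μ₀ (joinAtom T ξ 1 r f)).toReal)
      (b := (μ (joinAtom T ξ 1 r f)).toReal) hε hε6 ENNReal.toReal_nonneg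
      (by simpa using ENNReal.toReal_mono ENNReal.one_ne_top (prob_le_one (μ := μ₀)))
      ENNReal.toReal_nonneg (hclose' f)
    calc ENNReal.ofReal (Real.negMulLog (μ (joinAtom T ξ 1 r f)).toReal)
        ≤ ENNReal.ofReal ((1 + 2*ε) * Real.negMulLog (μ₀ (joinAtom T ξ 1 r f)).toReal
            + 2*ε*Real.log 3 * (μ₀ (joinAtom T ξ 1 r f)).toReal) :=
          ENNReal.ofReal_le_ofReal h1
      _ ≤ ENNReal.ofReal ((1 + 2*ε) * Real.negMulLog (μ₀ (joinAtom T ξ 1 r f)).toReal)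
            + ENNReal.ofReal (2*ε*Real.log 3 * (μ₀ (joinAtom T ξ 1 r f)).toReal) :=
          ENNReal.ofReal_add_le
      _ = ENNReal.ofReal (1 + 2*ε) *
            ENNReal.ofReal (Real.negMulLog (μ₀ (joinAtom T ξ 1 r f)).toReal)
          + ENNReal.ofReal (2*ε*Real.log 3) * μ₀ (joinAtom T ξ 1 r f) := by
          rw [ENNReal.ofReal_mul (by linarith), ENNReal.ofReal_mul (by positivity),
            ENNReal.ofReal_toReal (measure_ne_top μ₀ _)]
  -- Step 3: sum up.
  have hsum : ∑' f : Fin r → ℕ, μ₀ (joinAtom T ξ 1 r f) ≤ 1 := by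
    rw [← measure_iUnion (joinAtom_disjoint T hdisj 1 r)
      (fun f => joinAtom_measurable T hmeas 1 r f)]
    exact prob_le_one
  calc partEntropy μ (joinAtom T ξ 1 r)
      ≤ ∑' f : Fin r → ℕ, (ENNReal.ofReal (1 + 2*ε) *
            ENNReal.ofReal (Real.negMulLog (μ₀ (joinAtom T ξ 1 r f)).toReal)
          + ENNReal.ofReal (2*ε*Real.log 3) * μ₀ (joinAtom T ξ 1 r f)) :=
        ENNReal.tsum_le_tsum key
    _ = ENNReal.ofReal (1 + 2*ε) * partEntropy μ₀ (joinAtom T ξ 1 r)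
          + ENNReal.ofReal (2*ε*Real.log 3) * ∑' f : Fin r → ℕ, μ₀ (joinAtom T ξ 1 r f) := by
        rw [ENNReal.tsum_add, ENNReal.tsum_mul_left, ENNReal.tsum_mul_left]; rfl
    _ ≤ ENNReal.ofReal (1 + 2*ε) * partEntropy μ₀ (joinAtom T ξ 1 r)
          + ENNReal.ofReal (2*ε*Real.log 3) * 1 := by gcongr
    _ = (1 + ENNReal.ofReal (2 * ε)) * partEntropy μ₀ (joinAtom T ξ 1 r) +
          ENNReal.ofReal (2 * ε * Real.log 3) := by
        rw [mul_one, ← ENNReal.ofReal_one, ← ENNReal.ofReal_add (by norm_num) (by positivity)]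
end

section
/- Let T be an automorphism of a measurable space (X, 𝓕) and μ₀ a T-invariant probability measure. Let ξ be a countable measurable partition of (X, 𝓕) whose atoms are enumerated as A₁, A₂, …, and for m ∈ ℕ let ξ_m denote the finite partition obtained from ξ by replacing all atoms with index ≥ m by their union. Suppose there exist a sequence (μₙ)_{n≥1} of T-invariant probability measures, natural numbers rₙ → ∞, and positive reals εₙ → 0 such that: (i) ξ is a generator for (T, μₙ) for every n ≥ 0; (ii) |μ₀(A) − μₙ(A)| ≤ εₙ μₙ(A) for every atom A of ⋁_{i=0}^{rₙ} T^{-i} ξ and every n ≥ 0; (iii) limsup_{m→∞} limsup_{n→∞} h_{μₙ}(T, ξ_m) ≥ h for some h ≥ 0. Then h_{μ₀}(T) ≥ h. -/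
open MeasureTheory Filter Set
open scoped ENNReal

/-- The entropy of `T` relative to the partition `ξ`:
`h_μ(T, ξ) = lim_n (1/n) H_μ(⋁_{i=1}^n T⁻ⁱ ξ)` (formalized via `liminf`). -/
noncomputable def entropyOf {X : Type*} [MeasurableSpace X]
    (T : X → X) (μ : Measure X) (ξ : ℕ → Set X) : ℝ≥0∞ :=
  Filter.atTop.liminf (fun n : ℕ => partEntropy μ (joinAtom T ξ 1 n) / (n : ℝ≥0∞))

/-- Kolmogorov–Sinai entropy: the supremum of `h_μ(T, η)` over all countable
measurable partitions `η` of finite entropy. -/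
noncomputable def ksEntropy {X : Type*} [MeasurableSpace X]
    (T : X → X) (μ : Measure X) : ℝ≥0∞ :=
  ⨆ (η : ℕ → Set X) (_ : IsCountablePartition η) (_ : partEntropy μ η ≠ ⊤),
    entropyOf T μ η

/-- `ξ` is a generator for `(T, μ)`: the σ-algebra generated by
`{T^{-i} ξ_j : i ∈ ℤ, j ∈ ℕ}` equals the full σ-algebra modulo `μ`-null sets. -/
def IsGenerator {X : Type*} [MeasurableSpace X]
    (T : X ≃ᵐ X) (μ : Measure X) (ξ : ℕ → Set X) : Prop :=
  ∀ A : Set X, MeasurableSet A → ∃ B : Set X,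
    MeasurableSet[MeasurableSpace.generateFrom
      {S : Set X | ∃ (i : ℤ) (j : ℕ), S = ⇑(T.toEquiv ^ i) ⁻¹' (ξ j)}] B ∧
    μ (symmDiff A B) = 0

/-- The finite partition `ξ_m` obtained from the enumerated partition
`ξ 0, ξ 1, ξ 2, …` by replacing all atoms with index `≥ m` by their union:
its atoms are `ξ 0, …, ξ (m-1)` together with `⋃_{j ≥ m} ξ j` (placed at
index `m`; all further indices carry the empty set). -/
noncomputable def truncPart {X : Type*} (ξ : ℕ → Set X) (m : ℕ) : ℕ → Set X :=
  fun i => if i < m then ξ i else if i = m then ⋃ j, ⋃ (_ : m ≤ j), ξ j else ∅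

namespace KSAux
set_option linter.unusedSectionVars false
set_option linter.unusedVariables false
set_option maxHeartbeats 1000000

variable {X : Type*} [MeasurableSpace X]

def wd {m K : ℕ} (f : Fin K → Fin (m + 1)) : Fin K → ℕ := fun j => (f j : ℕ)

lemma wd_injective {m K : ℕ} : Function.Injective (@wd m K) := by
  intro f g hfg
  funext j
  exact Fin.val_injective (congrFun hfg j)

structure PartData (ζ : ℕ → Set X) (m : ℕ) : Prop where
  meas : ∀ i, MeasurableSet (ζ i)
  disj : Pairwise (Function.onFun Disjoint ζ)
  empt : ∀ i, m < i → ζ i = ∅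
  cover : (⋃ i, ζ i) = Set.univ

variable {T : X → X} {ζ : ℕ → Set X} {m : ℕ}

lemma joinAtom_meas (hT : Measurable T) (hζ : ∀ i, MeasurableSet (ζ i)) (k K : ℕ)
    (f : Fin K → ℕ) : MeasurableSet (joinAtom T ζ k K f) :=
  MeasurableSet.iInter fun _ => (hT.iterate _) (hζ _)

lemma joinAtom_disjoint (hζ : Pairwise (Function.onFun Disjoint ζ)) (k K : ℕ)
    {f g : Fin K → ℕ} (hfg : f ≠ g) :
    Disjoint (joinAtom T ζ k K f) (joinAtom T ζ k K g) := by
  obtain ⟨j, hj⟩ := Function.ne_iff.1 hfg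
  exact Disjoint.mono (Set.iInter_subset _ j) (Set.iInter_subset _ j) ((hζ hj).preimage _)

lemma joinAtom_empty (hP : ∀ i, m < i → ζ i = ∅) {k K : ℕ} {f : Fin K → ℕ}
    (hf : ∃ j, m < f j) : joinAtom T ζ k K f = ∅ := by
  obtain ⟨j, hj⟩ := hf
  refine Set.eq_empty_of_subset_empty ((Set.iInter_subset _ j).trans ?_)
  rw [hP _ hj]; simp

lemma joinAtom_cover (hP : PartData ζ m) (k K : ℕ) :
    (⋃ f : Fin K → Fin (m+1), joinAtom T ζ k K (wd f)) = Set.univ := by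
  ext x; simp only [Set.mem_iUnion, Set.mem_univ, iff_true]
  have : ∀ j : Fin K, ∃ i : Fin (m+1), (T^[k + j]) x ∈ ζ i := by
    intro j
    have hx : (T^[k + j]) x ∈ ⋃ i, ζ i := hP.cover ▸ Set.mem_univ _
    obtain ⟨i, hi⟩ := Set.mem_iUnion.1 hx
    have him : i ≤ m := by
      by_contra hc
      rw [hP.empt i (lt_of_not_ge hc)] at hi; exact hi
    exact ⟨⟨i, Nat.lt_succ_of_le him⟩, hi⟩
  choose F hF using this
  exact ⟨F, Set.mem_iInter.2 fun j => hF j⟩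

lemma sum_measure_joinAtom (hP : PartData ζ m) (hT : Measurable T) (ν : Measure X)
    [IsProbabilityMeasure ν] (k K : ℕ) :
    ∑ f : Fin K → Fin (m+1), ν (joinAtom T ζ k K (wd f)) = 1 := by
  rw [← tsum_fintype (L := SummationFilter.unconditional _), ← measure_iUnion ?_ ?_, joinAtom_cover hP k K, measure_univ]
  · intro f g hfg
    exact joinAtom_disjoint hP.disj _ _ (fun hc => hfg (wd_injective hc))
  · intro f; exact joinAtom_meas hT hP.meas _ _ _

noncomputable def Hfin (T : X → X) (ζ : ℕ → Set X) (m : ℕ) (ν : Measure X) (K : ℕ) : ℝ :=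
  ∑ f : Fin K → Fin (m+1), Real.negMulLog ((ν (joinAtom T ζ 1 K (wd f))).toReal)

lemma toReal_le_one (ν : Measure X) [IsProbabilityMeasure ν] (S : Set X) :
    (ν S).toReal ≤ 1 := by
  have h1 : ν S ≤ 1 := prob_le_one
  simpa using ENNReal.toReal_mono ENNReal.one_ne_top h1

lemma Hfin_nonneg (ν : Measure X) [IsProbabilityMeasure ν] (K : ℕ) :
    0 ≤ Hfin T ζ m ν K :=
  Finset.sum_nonneg fun f _ =>
    Real.negMulLog_nonneg ENNReal.toReal_nonneg (toReal_le_one ν _)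

lemma partEntropy_eq (hP : PartData ζ m) (ν : Measure X) [IsProbabilityMeasure ν] (K : ℕ) :
    partEntropy ν (joinAtom T ζ 1 K) = ENNReal.ofReal (Hfin T ζ m ν K) := by
  have h0 : ∀ f : Fin K → ℕ, f ∉ Finset.image (@wd m K) Finset.univ →
      ENNReal.ofReal (Real.negMulLog ((ν (joinAtom T ζ 1 K f)).toReal)) = 0 := by
    intro f hf
    have hex : ∃ j, m < f j := by
      by_contra hc
      push_neg at hc
      exact hf (Finset.mem_image.2 ⟨fun j => ⟨f j, Nat.lt_succ_of_le (hc j)⟩,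
        Finset.mem_univ _, rfl⟩)
    rw [joinAtom_empty (T := T) hP.empt hex]
    simp
  rw [partEntropy, tsum_eq_sum h0,
    Finset.sum_image (fun x _ y _ h => wd_injective h),
    ← ENNReal.ofReal_sum_of_nonneg (fun f _ =>
      Real.negMulLog_nonneg ENNReal.toReal_nonneg (toReal_le_one ν _))]
  rfl


section Gibbs
open Real Finset in

lemma gibbs {ι κ : Type*} [Fintype ι] [Fintype κ] (p : ι → κ → ℝ)
    (hp : ∀ u v, 0 ≤ p u v) (hsum : ∑ u, ∑ v, p u v = 1) :
    ∑ u, ∑ v, negMulLog (p u v) ≤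
      (∑ u, negMulLog (∑ v, p u v)) + ∑ v, negMulLog (∑ u, p u v) := by
  classical
  set a : ι → ℝ := fun u => ∑ v, p u v with ha_def
  set b : κ → ℝ := fun v => ∑ u, p u v with hb_def
  set S : Finset (ι × κ) := Finset.univ.filter (fun z => 0 < p z.1 z.2) with hS_def
  have hzero : ∀ z : ι × κ, z ∉ S → p z.1 z.2 = 0 := by
    intro z hz
    have h0 : ¬ 0 < p z.1 z.2 := fun hc => hz (Finset.mem_filter.2 ⟨Finset.mem_univ _, hc⟩)
    exact le_antisymm (not_lt.1 h0) (hp _ _)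
  have hSsub : ∀ F : ι × κ → ℝ, (∀ z : ι × κ, p z.1 z.2 = 0 → F z = 0) →
      ∑ z ∈ S, F z = ∑ u, ∑ v, F (u, v) := by
    intro F hF
    rw [← Fintype.sum_prod_type]
    exact Finset.sum_subset (Finset.filter_subset _ _) (fun z _ hz => hF z (hzero z hz))
  have hS1 : ∑ z ∈ S, p z.1 z.2 = 1 := by
    rw [hSsub _ (fun z hz => hz)]; exact hsum
  have hapos : ∀ z : ι × κ, z ∈ S → 0 < a z.1 := by
    intro z hz
    have hpz : 0 < p z.1 z.2 := (Finset.mem_filter.1 hz).2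
    exact lt_of_lt_of_le hpz (Finset.single_le_sum (fun v _ => hp z.1 v) (Finset.mem_univ _))
  have hbpos : ∀ z : ι × κ, z ∈ S → 0 < b z.2 := by
    intro z hz
    have hpz : 0 < p z.1 z.2 := (Finset.mem_filter.1 hz).2
    exact lt_of_lt_of_le hpz (Finset.single_le_sum (fun u _ => hp u z.2) (Finset.mem_univ _))
  -- Jensen step
  have key2 : ∑ z ∈ S, p z.1 z.2 * log (a z.1 * b z.2 / p z.1 z.2) ≤ 0 := by
    have hJ := (strictConcaveOn_log_Ioi.concaveOn).le_map_sum
      (t := S) (w := fun z => p z.1 z.2) (p := fun z => a z.1 * b z.2 / p z.1 z.2)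
      (fun z _ => hp _ _) hS1
      (fun z hz => Set.mem_Ioi.2 (div_pos (mul_pos (hapos z hz) (hbpos z hz))
        (Finset.mem_filter.1 hz).2))
    simp only [smul_eq_mul] at hJ
    refine hJ.trans (Real.log_nonpos ?_ ?_)
    · exact Finset.sum_nonneg fun z hz => mul_nonneg (hp _ _)
        (div_nonneg (mul_nonneg (hapos z hz).le (hbpos z hz).le) (hp _ _))
    · have heq : ∀ z ∈ S, p z.1 z.2 * (a z.1 * b z.2 / p z.1 z.2) = a z.1 * b z.2 := by
        intro z hz
        rw [mul_div_cancel₀ _ (ne_of_gt (Finset.mem_filter.1 hz).2)]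
      rw [Finset.sum_congr rfl heq]
      have h2 : ∑ z ∈ S, a z.1 * b z.2 ≤ ∑ z : ι × κ, a z.1 * b z.2 := by
        refine Finset.sum_le_sum_of_subset_of_nonneg (Finset.subset_univ _) ?_
        intro z _ _
        have ha0 : 0 ≤ a z.1 := Finset.sum_nonneg fun v _ => hp _ _
        have hb0 : 0 ≤ b z.2 := Finset.sum_nonneg fun u _ => hp _ _
        positivity
      have h3 : ∑ z : ι × κ, a z.1 * b z.2 = 1 := by
        rw [Fintype.sum_prod_type]
        have : ∀ u : ι, ∑ v, a u * b v = a u * ∑ v, b v := by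
          intro u; rw [Finset.mul_sum]
        rw [Finset.sum_congr rfl (fun u _ => this u), ← Finset.sum_mul]
        have hb1 : ∑ v, b v = 1 := by
          rw [hb_def]; rw [Finset.sum_comm]; exact hsum
        rw [hb1, hsum, one_mul]
      linarith
  have hpt : ∀ z ∈ S, negMulLog (p z.1 z.2) =
      p z.1 z.2 * log (a z.1 * b z.2 / p z.1 z.2)
        - p z.1 z.2 * log (a z.1) - p z.1 z.2 * log (b z.2) := by
    intro z hz
    have hpz : 0 < p z.1 z.2 := (Finset.mem_filter.1 hz).2
    rw [Real.log_div (mul_pos (hapos z hz) (hbpos z hz)).ne' hpz.ne',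
      Real.log_mul (hapos z hz).ne' (hbpos z hz).ne', negMulLog]
    ring
  have hA : ∑ z ∈ S, p z.1 z.2 * log (a z.1) = - ∑ u, negMulLog (a u) := by
    rw [hSsub _ (fun z hz => by rw [hz, zero_mul])]
    have : ∀ u : ι, ∑ v, p u v * log (a u) = a u * log (a u) := by
      intro u; rw [← Finset.sum_mul]
    rw [Finset.sum_congr rfl (fun u _ => this u)]
    simp [negMulLog, Finset.sum_neg_distrib]
  have hB : ∑ z ∈ S, p z.1 z.2 * log (b z.2) = - ∑ v, negMulLog (b v) := by
    rw [hSsub _ (fun z hz => by rw [hz, zero_mul])]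
    rw [Finset.sum_comm]
    have : ∀ v : κ, ∑ u, p u v * log (b v) = b v * log (b v) := by
      intro v; rw [← Finset.sum_mul]
    rw [Finset.sum_congr rfl (fun v _ => this v)]
    simp [negMulLog, Finset.sum_neg_distrib]
  have hmain : ∑ u, ∑ v, negMulLog (p u v) = ∑ z ∈ S, negMulLog (p z.1 z.2) := by
    rw [hSsub _ (fun z hz => by rw [hz, negMulLog_zero])]
  rw [hmain, Finset.sum_congr rfl hpt]
  rw [Finset.sum_sub_distrib, Finset.sum_sub_distrib, hA, hB]
  linarith

end Gibbs

lemma joinAtom_split (a b : ℕ) (f : Fin (a + b) → ℕ) :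
    joinAtom T ζ 1 (a + b) f =
      joinAtom T ζ 1 a (fun u => f (Fin.castAdd b u)) ∩
        T^[a] ⁻¹' joinAtom T ζ 1 b (fun v => f (Fin.natAdd a v)) := by
  have hiter : ∀ (v : ℕ) (x : X), T^[1 + (a + v)] x = T^[1 + v] (T^[a] x) := by
    intro v x
    rw [show 1 + (a + v) = (1 + v) + a by ring, Function.iterate_add_apply]
  ext x
  simp only [joinAtom, Set.mem_iInter, Set.mem_inter_iff, Set.mem_preimage]
  constructor
  · intro H
    refine ⟨fun u => ?_, fun v => ?_⟩
    · have := H (Fin.castAdd b u)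
      simpa using this
    · have := H (Fin.natAdd a v)
      simp only [Fin.coe_natAdd] at this
      rw [hiter v x] at this
      exact this
  · rintro ⟨H1, H2⟩ j
    refine Fin.addCases (motive := fun j => T^[1 + (j : ℕ)] x ∈ ζ (f j)) ?_ ?_ j
    · intro u; simpa using H1 u
    · intro v
      simp only [Fin.coe_natAdd]
      rw [hiter v x]
      exact H2 v


lemma measure_eq_sum_inter {ι : Type*} [Fintype ι] (ν : Measure X) (A : Set X)
    (Q : ι → Set X) (hQm : ∀ v, MeasurableSet (Q v))
    (hQd : Pairwise (Function.onFun Disjoint Q)) (hQc : (⋃ v, Q v) = Set.univ)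
    (hA : MeasurableSet A) :
    ν A = ∑ v, ν (A ∩ Q v) := by
  conv_lhs => rw [show A = ⋃ v, A ∩ Q v by rw [← Set.inter_iUnion, hQc, Set.inter_univ]]
  rw [measure_iUnion ?_ (fun v => hA.inter (hQm v)), tsum_fintype]
  intro v v' hvv'
  exact (hQd hvv').mono Set.inter_subset_right Set.inter_subset_right

open Real in
lemma Hfin_subadd (hP : PartData ζ m) (hT : Measurable T)
    (ν : Measure X) [IsProbabilityMeasure ν] (hν : MeasurePreserving T ν ν) :
    Subadditive (Hfin T ζ m ν) := by
  intro a b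
  classical
  have hTa : MeasurePreserving T^[a] ν ν := hν.iterate a
  set P : (Fin a → Fin (m+1)) → Set X := fun u => joinAtom T ζ 1 a (wd u) with hPdef
  set Q : (Fin b → Fin (m+1)) → Set X := fun v => joinAtom T ζ 1 b (wd v) with hQdef
  set Q' : (Fin b → Fin (m+1)) → Set X := fun v => T^[a] ⁻¹' Q v with hQ'def
  have hPmeas : ∀ u, MeasurableSet (P u) := fun u => joinAtom_meas hT hP.meas _ _ _
  have hQmeas : ∀ v, MeasurableSet (Q v) := fun v => joinAtom_meas hT hP.meas _ _ _
  have hQ'meas : ∀ v, MeasurableSet (Q' v) := fun v => (hT.iterate a) (hQmeas v)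
  have hPdisj : Pairwise (Function.onFun Disjoint P) := fun u u' huu' =>
    joinAtom_disjoint hP.disj _ _ (fun hc => huu' (wd_injective hc))
  have hQ'disj : Pairwise (Function.onFun Disjoint Q') := fun v v' hvv' =>
    Disjoint.preimage _ (joinAtom_disjoint hP.disj _ _ (fun hc => hvv' (wd_injective hc)))
  have hPcover : (⋃ u, P u) = Set.univ := joinAtom_cover hP 1 a
  have hQ'cover : (⋃ v, Q' v) = Set.univ := by
    rw [hQ'def, ← Set.preimage_iUnion, joinAtom_cover hP 1 b, Set.preimage_univ]
  have hQ'measval : ∀ v, ν (Q' v) = ν (Q v) := fun v =>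
    hTa.measure_preimage (hQmeas v).nullMeasurableSet
  -- marginals, in ℝ
  have h1 : ∀ u, ∑ v, (ν (P u ∩ Q' v)).toReal = (ν (P u)).toReal := by
    intro u
    rw [← ENNReal.toReal_sum (fun v _ => measure_ne_top ν _),
      ← measure_eq_sum_inter ν (P u) Q' hQ'meas hQ'disj hQ'cover (hPmeas u)]
  have h2 : ∀ v, ∑ u, (ν (P u ∩ Q' v)).toReal = (ν (Q v)).toReal := by
    intro v
    have hQP := measure_eq_sum_inter ν (Q' v) P hPmeas hPdisj hPcover (hQ'meas v)
    calc ∑ u, (ν (P u ∩ Q' v)).toReal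
        = ∑ u, (ν (Q' v ∩ P u)).toReal :=
          Finset.sum_congr rfl (fun u _ => by rw [Set.inter_comm])
      _ = (ν (Q' v)).toReal := by
          rw [← ENNReal.toReal_sum (fun u _ => measure_ne_top ν _), ← hQP]
      _ = (ν (Q v)).toReal := by rw [hQ'measval v]
  have hsum : ∑ u, ∑ v, (ν (P u ∩ Q' v)).toReal = 1 := by
    rw [Finset.sum_congr rfl (fun u _ => h1 u),
      ← ENNReal.toReal_sum (fun u _ => measure_ne_top ν _),
      sum_measure_joinAtom hP hT ν 1 a, ENNReal.toReal_one]
  -- splitting of the (a+b)-join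
  have hsplit : Hfin T ζ m ν (a + b) =
      ∑ u, ∑ v, negMulLog ((ν (P u ∩ Q' v)).toReal) := by
    rw [Hfin]
    set e : (Fin (a + b) → Fin (m+1)) ≃
        (Fin a → Fin (m+1)) × (Fin b → Fin (m+1)) :=
      ((finSumFinEquiv.symm).arrowCongr (Equiv.refl (Fin (m+1)))).trans
        (Equiv.sumArrowEquivProdArrow _ _ _) with hedef
    refine Eq.trans (Fintype.sum_equiv e _
      (fun z => negMulLog ((ν (P z.1 ∩ Q' z.2)).toReal)) ?_) (Fintype.sum_prod_type _)
    intro f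
    have e1 : (e f).1 = fun u => f (Fin.castAdd b u) := by
      funext u
      simp [hedef, Equiv.sumArrowEquivProdArrow, Equiv.arrowCongr]
    have e2 : (e f).2 = fun v => f (Fin.natAdd a v) := by
      funext v
      simp [hedef, Equiv.sumArrowEquivProdArrow, Equiv.arrowCongr]
    have hatom : joinAtom T ζ 1 (a + b) (wd f) =
        P (fun u => f (Fin.castAdd b u)) ∩ Q' (fun v => f (Fin.natAdd a v)) :=
      joinAtom_split a b (wd f)
    show _ = negMulLog ((ν (P (e f).1 ∩ Q' (e f).2)).toReal)
    rw [hatom, e1, e2]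
  rw [hsplit]
  refine (gibbs _ (fun u v => ENNReal.toReal_nonneg) hsum).trans ?_
  apply le_of_eq
  congr 1
  · exact Finset.sum_congr rfl (fun u _ => by rw [h1 u])
  · exact Finset.sum_congr rfl (fun v _ => by rw [h2 v])

lemma Hfin_bddBelow (ν : Measure X) [IsProbabilityMeasure ν] :
    BddBelow (Set.range fun K : ℕ => Hfin T ζ m ν K / K) := by
  refine ⟨0, ?_⟩
  rintro x ⟨K, rfl⟩
  exact div_nonneg (Hfin_nonneg ν K) (Nat.cast_nonneg K)

lemma tendsto_Hfin_div (hP : PartData ζ m) (hT : Measurable T) (ν : Measure X)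
    [IsProbabilityMeasure ν] (hν : MeasurePreserving T ν ν) :
    Tendsto (fun K : ℕ => Hfin T ζ m ν K / K) atTop
      (nhds (Hfin_subadd hP hT ν hν).lim) :=
  (Hfin_subadd hP hT ν hν).tendsto_lim (Hfin_bddBelow ν)

lemma entropyOf_eq (hP : PartData ζ m) (hT : Measurable T) (ν : Measure X)
    [IsProbabilityMeasure ν] (hν : MeasurePreserving T ν ν) :
    entropyOf T ν ζ = ENNReal.ofReal ((Hfin_subadd hP hT ν hν).lim) := by
  have htend : Tendsto (fun K : ℕ => ENNReal.ofReal (Hfin T ζ m ν K / K)) atTop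
      (nhds (ENNReal.ofReal (Hfin_subadd hP hT ν hν).lim)) :=
    (ENNReal.continuous_ofReal.tendsto _).comp (tendsto_Hfin_div hP hT ν hν)
  have heq : ∀ᶠ K : ℕ in atTop, partEntropy ν (joinAtom T ζ 1 K) / (K : ℝ≥0∞) =
      ENNReal.ofReal (Hfin T ζ m ν K / K) := by
    filter_upwards [eventually_ge_atTop 1] with K hK
    have hKpos : (0 : ℝ) < K := by exact_mod_cast hK
    rw [partEntropy_eq hP ν K, ENNReal.ofReal_div_of_pos hKpos, ENNReal.ofReal_natCast]
  rw [entropyOf, Filter.liminf_congr heq]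
  exact htend.liminf_eq

lemma joinAtom_one_eq_preimage (K : ℕ) (g : Fin K → ℕ) :
    joinAtom T ζ 1 K g = T ⁻¹' (joinAtom T ζ 0 K g) := by
  have hit : ∀ (x : X) (j : ℕ), T^[1 + j] x = T^[j] (T x) := by
    intro x j
    rw [Nat.add_comm, Function.iterate_add_apply, Function.iterate_one]
  ext x
  simp only [joinAtom, Set.mem_iInter, Set.mem_preimage, Nat.zero_add]
  constructor <;> intro H j
  · rw [← hit]; exact H j
  · rw [hit]; exact H j

lemma measure_joinAtom_one (hT : Measurable T) (hζm : ∀ i, MeasurableSet (ζ i))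
    (ν : Measure X) (hν : MeasurePreserving T ν ν) (K : ℕ) (g : Fin K → ℕ) :
    ν (joinAtom T ζ 1 K g) = ν (joinAtom T ζ 0 K g) := by
  rw [joinAtom_one_eq_preimage]
  exact hν.measure_preimage (joinAtom_meas hT hζm 0 K g).nullMeasurableSet

lemma joinAtom_trunc_eq_iUnion {ξ : ℕ → Set X}
    (hrel : ∀ c : ℕ, c ≤ m → ζ c = ⋃ (i : ℕ) (_ : min i m = c), ξ i)
    (K : ℕ) (g : Fin K → ℕ) (hg : ∀ j, g j ≤ m) :
    joinAtom T ζ 0 K g =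
      ⋃ hh : {hh : Fin K → ℕ // ∀ j, min (hh j) m = g j}, joinAtom T ξ 0 K hh.1 := by
  ext x
  simp only [joinAtom, Set.mem_iInter, Set.mem_iUnion, Set.mem_preimage]
  constructor
  · intro H
    have : ∀ j : Fin K, ∃ i : ℕ, min i m = g j ∧ T^[0 + (j : ℕ)] x ∈ ξ i := by
      intro j
      have := H j
      rw [hrel (g j) (hg j)] at this
      simp only [Set.mem_iUnion] at this
      obtain ⟨i, hi1, hi2⟩ := this
      exact ⟨i, hi1, hi2⟩
    choose hh hh1 hh2 using this
    exact ⟨⟨hh, hh1⟩, hh2⟩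
  · rintro ⟨⟨hh, hh1⟩, hh2⟩ j
    rw [hrel (g j) (hg j)]
    simp only [Set.mem_iUnion]
    exact ⟨hh j, hh1 j, hh2 j⟩

lemma abs_toReal_sub_le (μ0 μn : Measure X) [IsProbabilityMeasure μ0]
    [IsProbabilityMeasure μn] {ι : Type*} [Countable ι] (A : ι → Set X)
    (hAm : ∀ i, MeasurableSet (A i)) (hAd : Pairwise (Function.onFun Disjoint A)) {ε : ℝ}
    (hcl : ∀ i, |(μ0 (A i)).toReal - (μn (A i)).toReal| ≤ ε * (μn (A i)).toReal) :
    |(μ0 (⋃ i, A i)).toReal - (μn (⋃ i, A i)).toReal| ≤ ε * (μn (⋃ i, A i)).toReal := by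
  rw [measure_iUnion hAd hAm, measure_iUnion hAd hAm,
    ENNReal.tsum_toReal_eq (fun i => measure_ne_top μ0 _),
    ENNReal.tsum_toReal_eq (fun i => measure_ne_top μn _)]
  have hp : Summable (fun i => (μ0 (A i)).toReal) :=
    ENNReal.summable_toReal (by rw [← measure_iUnion hAd hAm]; exact measure_ne_top μ0 _)
  have hq : Summable (fun i => (μn (A i)).toReal) :=
    ENNReal.summable_toReal (by rw [← measure_iUnion hAd hAm]; exact measure_ne_top μn _)
  have habs : Summable (fun i => |(μ0 (A i)).toReal - (μn (A i)).toReal|) :=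
    Summable.of_nonneg_of_le (fun i => abs_nonneg _) hcl (hq.mul_left ε)
  calc |∑' i, (μ0 (A i)).toReal - ∑' i, (μn (A i)).toReal|
      = |∑' i, ((μ0 (A i)).toReal - (μn (A i)).toReal)| := by rw [hp.tsum_sub hq]
    _ ≤ ∑' i, |(μ0 (A i)).toReal - (μn (A i)).toReal| := by
        have := norm_tsum_le_tsum_norm
          (f := fun i => (μ0 (A i)).toReal - (μn (A i)).toReal)
          (by simpa [Real.norm_eq_abs] using habs)
        simpa [Real.norm_eq_abs] using this
    _ ≤ ∑' i, ε * (μn (A i)).toReal := habs.tsum_le_tsum hcl (hq.mul_left ε)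
    _ = ε * ∑' i, (μn (A i)).toReal := tsum_mul_left

lemma close_join (hT : Measurable T) {ξ : ℕ → Set X} (hξm : ∀ i, MeasurableSet (ξ i))
    (hξd : Pairwise (Function.onFun Disjoint ξ))
    (hrel : ∀ c : ℕ, c ≤ m → ζ c = ⋃ (i : ℕ) (_ : min i m = c), ξ i)
    (μ0 μn : Measure X) [IsProbabilityMeasure μ0] [IsProbabilityMeasure μn] {ε : ℝ}
    (K : ℕ) (g : Fin K → ℕ) (hg : ∀ j, g j ≤ m)
    (hcl : ∀ hh : Fin K → ℕ, |(μ0 (joinAtom T ξ 0 K hh)).toReal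
        - (μn (joinAtom T ξ 0 K hh)).toReal| ≤ ε * (μn (joinAtom T ξ 0 K hh)).toReal) :
    |(μ0 (joinAtom T ζ 0 K g)).toReal - (μn (joinAtom T ζ 0 K g)).toReal|
      ≤ ε * (μn (joinAtom T ζ 0 K g)).toReal := by
  rw [joinAtom_trunc_eq_iUnion hrel K g hg]
  refine abs_toReal_sub_le μ0 μn
    (ι := {hh : Fin K → ℕ // ∀ j, min (hh j) m = g j})
    (fun hh => joinAtom T ξ 0 K hh.1)
    (fun hh => joinAtom_meas hT hξm 0 K hh.1) ?_ (fun hh => hcl hh.1)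
  intro hh hh' hne
  exact joinAtom_disjoint hξd 0 K (fun hc => hne (Subtype.ext hc))

open Real in
lemma negMulLog_le_of_close {p q ε : ℝ} (hq : 0 ≤ q) (hp1 : p ≤ 1) (hε : 0 < ε)
    (hε1 : ε < 1) (hpq : |p - q| ≤ ε * q) :
    negMulLog q ≤ q * Real.log (1 + ε) + negMulLog p / (1 - ε) := by
  rcases eq_or_lt_of_le hq with hq0 | hqpos
  · have hp0 : p = 0 := by
      have h1 := (abs_le.1 hpq).1
      have h2 := (abs_le.1 hpq).2
      nlinarith
    simp [← hq0, hp0]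
  · have h1 : p ≤ (1 + ε) * q := by have := (abs_le.1 hpq).2; nlinarith
    have h2 : (1 - ε) * q ≤ p := by have := (abs_le.1 hpq).1; nlinarith
    have hppos : 0 < p := lt_of_lt_of_le (by nlinarith) h2
    have hsplit : Real.log q = Real.log (q / p) + Real.log p := by
      rw [Real.log_div hqpos.ne' hppos.ne']; ring
    have hA : -(q * Real.log (q / p)) ≤ q * Real.log (1 + ε) := by
      have hge : 1 / (1 + ε) ≤ q / p := by
        rw [div_le_div_iff₀ (by positivity) hppos]
        nlinarith
      have hlog := Real.log_le_log (by positivity) hge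
      rw [Real.log_div one_ne_zero (by positivity : (1 + ε) ≠ 0), Real.log_one] at hlog
      nlinarith
    have hB : -(q * Real.log p) ≤ negMulLog p / (1 - ε) := by
      have hlogp : Real.log p ≤ 0 := Real.log_nonpos hppos.le hp1
      have hqle : q ≤ p / (1 - ε) := by rw [le_div_iff₀ (by linarith)]; nlinarith
      have hmul := mul_le_mul_of_nonneg_right hqle (neg_nonneg.2 hlogp)
      calc -(q * Real.log p) = q * (-Real.log p) := by ring
        _ ≤ (p / (1 - ε)) * (-Real.log p) := hmul
        _ = negMulLog p / (1 - ε) := by rw [negMulLog]; ring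
    calc negMulLog q = -(q * Real.log (q / p)) + -(q * Real.log p) := by
          rw [negMulLog, hsplit]; ring
      _ ≤ q * Real.log (1 + ε) + negMulLog p / (1 - ε) := add_le_add hA hB

lemma sum_toReal_joinAtom_one (hP : PartData ζ m) (hT : Measurable T) (ν : Measure X)
    [IsProbabilityMeasure ν] (k K : ℕ) :
    ∑ f : Fin K → Fin (m+1), (ν (joinAtom T ζ k K (wd f))).toReal = 1 := by
  rw [← ENNReal.toReal_sum (fun f _ => measure_ne_top ν _),
    sum_measure_joinAtom hP hT ν k K, ENNReal.toReal_one]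

open Real in
lemma Hfin_le (hP : PartData ζ m) (hT : Measurable T) {ξ : ℕ → Set X}
    (hξm : ∀ i, MeasurableSet (ξ i)) (hξd : Pairwise (Function.onFun Disjoint ξ))
    (hrel : ∀ c : ℕ, c ≤ m → ζ c = ⋃ (i : ℕ) (_ : min i m = c), ξ i)
    (μ0 μn : Measure X) [IsProbabilityMeasure μ0] [IsProbabilityMeasure μn]
    (hμ0 : MeasurePreserving T μ0 μ0) (hμn : MeasurePreserving T μn μn)
    {ε : ℝ} (hε : 0 < ε) (hε1 : ε < 1) (K : ℕ)
    (hcl : ∀ hh : Fin K → ℕ, |(μ0 (joinAtom T ξ 0 K hh)).toReal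
        - (μn (joinAtom T ξ 0 K hh)).toReal| ≤ ε * (μn (joinAtom T ξ 0 K hh)).toReal) :
    Hfin T ζ m μn K ≤ Real.log (1 + ε) + Hfin T ζ m μ0 K / (1 - ε) := by
  have hterm : ∀ f : Fin K → Fin (m+1),
      negMulLog ((μn (joinAtom T ζ 1 K (wd f))).toReal) ≤
        (μn (joinAtom T ζ 1 K (wd f))).toReal * Real.log (1 + ε)
          + negMulLog ((μ0 (joinAtom T ζ 1 K (wd f))).toReal) / (1 - ε) := by
    intro f
    refine negMulLog_le_of_close ENNReal.toReal_nonneg (toReal_le_one μ0 _) hε hε1 ?_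
    rw [measure_joinAtom_one hT hP.meas μ0 hμ0, measure_joinAtom_one hT hP.meas μn hμn]
    exact close_join hT hξm hξd hrel μ0 μn K (wd f)
      (fun j => Nat.lt_succ_iff.1 (f j).2) hcl
  calc Hfin T ζ m μn K
      ≤ ∑ f : Fin K → Fin (m+1), ((μn (joinAtom T ζ 1 K (wd f))).toReal * Real.log (1 + ε)
          + negMulLog ((μ0 (joinAtom T ζ 1 K (wd f))).toReal) / (1 - ε)) :=
        Finset.sum_le_sum (fun f _ => hterm f)
    _ = (∑ f : Fin K → Fin (m+1), (μn (joinAtom T ζ 1 K (wd f))).toReal) * Real.log (1 + ε)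
          + (∑ f : Fin K → Fin (m+1), negMulLog ((μ0 (joinAtom T ζ 1 K (wd f))).toReal)) / (1 - ε) := by
        rw [Finset.sum_add_distrib, Finset.sum_mul, Finset.sum_div]
    _ = Real.log (1 + ε) + Hfin T ζ m μ0 K / (1 - ε) := by
        rw [sum_toReal_joinAtom_one hP hT μn 1 K, one_mul, Hfin]

lemma entropy_le_Hfin_div (hP : PartData ζ m) (hT : Measurable T) (ν : Measure X)
    [IsProbabilityMeasure ν] (hν : MeasurePreserving T ν ν) (K : ℕ) (hK : K ≠ 0) :
    entropyOf T ν ζ ≤ ENNReal.ofReal (Hfin T ζ m ν K / K) := by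
  rw [entropyOf_eq hP hT ν hν]
  exact ENNReal.ofReal_le_ofReal
    ((Hfin_subadd hP hT ν hν).lim_le_div (Hfin_bddBelow ν) hK)

lemma truncPart_eq (ξ : ℕ → Set X) (m : ℕ) :
    ∀ c : ℕ, c ≤ m → truncPart ξ m c = ⋃ (i : ℕ) (_ : min i m = c), ξ i := by
  intro c hc
  rcases lt_or_eq_of_le hc with h | h
  · simp only [truncPart]
    rw [if_pos h]
    ext x
    simp only [Set.mem_iUnion]
    constructor
    · intro hx; exact ⟨c, by omega, hx⟩
    · rintro ⟨i, hi, hx⟩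
      have hic : i = c := by omega
      rwa [← hic]
  · simp only [truncPart]
    rw [if_neg (by omega), if_pos h]
    ext x
    simp only [Set.mem_iUnion]
    constructor
    · rintro ⟨i, hi, hx⟩; exact ⟨i, by omega, hx⟩
    · rintro ⟨i, hi, hx⟩; exact ⟨i, by omega, hx⟩

lemma truncPart_empty (ξ : ℕ → Set X) (m : ℕ) : ∀ i, m < i → truncPart ξ m i = ∅ := by
  intro i hi
  simp only [truncPart]
  rw [if_neg (by omega), if_neg (by omega)]

lemma truncPart_partData {ξ : ℕ → Set X} (hξ : IsCountablePartition ξ) (m : ℕ) :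
    PartData (truncPart ξ m) m := by
  obtain ⟨hξm, hξd, hξc⟩ := hξ
  refine ⟨?_, ?_, truncPart_empty ξ m, ?_⟩
  · intro i
    simp only [truncPart]
    split_ifs
    exacts [hξm i, MeasurableSet.iUnion (fun j => MeasurableSet.iUnion fun _ => hξm j),
      MeasurableSet.empty]
  · intro i j hij
    show Disjoint (truncPart ξ m i) (truncPart ξ m j)
    rcases le_or_gt i m with hi | hi
    · rcases le_or_gt j m with hj | hj
      · rw [truncPart_eq ξ m i hi, truncPart_eq ξ m j hj]
        refine Set.disjoint_iUnion_left.2 fun a => Set.disjoint_iUnion_left.2 fun ha =>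
          Set.disjoint_iUnion_right.2 fun b => Set.disjoint_iUnion_right.2 fun hb => ?_
        exact hξd (show a ≠ b by omega)
      · rw [truncPart_empty ξ m j hj]; exact disjoint_bot_right
    · rw [truncPart_empty ξ m i hi]; exact disjoint_bot_left
  · ext x
    simp only [Set.mem_iUnion, Set.mem_univ, iff_true]
    have hx : x ∈ ⋃ i, ξ i := hξc ▸ Set.mem_univ x
    obtain ⟨i, hi⟩ := Set.mem_iUnion.1 hx
    refine ⟨min i m, ?_⟩
    rw [truncPart_eq ξ m (min i m) (min_le_right _ _)]
    exact Set.mem_iUnion.2 ⟨i, Set.mem_iUnion.2 ⟨rfl, hi⟩⟩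

lemma partEntropy_ne_top (pd : PartData ζ m) (ν : Measure X) : partEntropy ν ζ ≠ ⊤ := by
  rw [partEntropy, tsum_eq_sum (s := Finset.range (m+1)) ?_]
  · exact (ENNReal.sum_lt_top.2 fun i _ => ENNReal.ofReal_lt_top).ne
  · intro i hi
    have hmi : m < i := by
      have : ¬ i < m + 1 := fun hc => hi (Finset.mem_range.2 hc)
      omega
    rw [pd.empt i hmi]
    simp

end KSAux


set_option maxHeartbeats 2000000

/-- **Remark.** In the main theorem, the conditions
`limsup_n h_{μ n}(T) ≥ h` and `H_{μ 0}(ξ) < ∞` can be replaced by the single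
weaker condition `limsup_m limsup_n h_{μ n}(T, ξ_m) ≥ h`, where `ξ_m` is the
finite partition obtained from `ξ` by merging all atoms of index `≥ m`. -/
theorem ksEntropy_ge_of_approx_trunc {X : Type*} [MeasurableSpace X] (T : X ≃ᵐ X)
    (μ : ℕ → Measure X) (hprob : ∀ n, IsProbabilityMeasure (μ n))
    (hinv : ∀ n, MeasurePreserving T (μ n) (μ n))
    (ξ : ℕ → Set X) (hpart : IsCountablePartition ξ)
    (r : ℕ → ℕ) (ε : ℕ → ℝ) (hεpos : ∀ n, 0 < ε n)
    (hr : Tendsto r atTop atTop) (hε : Tendsto ε atTop (nhds 0))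
    (hgen : ∀ n, IsGenerator T (μ n) ξ)
    (hclose : ∀ n, ∀ f : Fin (r n + 1) → ℕ,
      |((μ 0) (joinAtom T ξ 0 (r n + 1) f)).toReal
          - ((μ n) (joinAtom T ξ 0 (r n + 1) f)).toReal|
        ≤ ε n * ((μ n) (joinAtom T ξ 0 (r n + 1) f)).toReal)
    (h : ℝ≥0∞)
    (hlim : h ≤ Filter.atTop.limsup (fun m =>
      Filter.atTop.limsup (fun n => entropyOf T (μ n) (truncPart ξ m)))) :
    h ≤ ksEntropy T (μ 0) := by
  classical
  have hT : Measurable (⇑T) := T.measurable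
  haveI : IsProbabilityMeasure (μ 0) := hprob 0
  have key : ∀ m : ℕ,
      Filter.atTop.limsup (fun n => entropyOf T (μ n) (truncPart ξ m)) ≤ ksEntropy T (μ 0) := by
    intro m
    have pd : KSAux.PartData (truncPart ξ m) m := KSAux.truncPart_partData hpart m
    set l0 := (KSAux.Hfin_subadd pd hT (μ 0) (hinv 0)).lim with hl0
    have h0eq : entropyOf T (μ 0) (truncPart ξ m) = ENNReal.ofReal l0 :=
      KSAux.entropyOf_eq pd hT (μ 0) (hinv 0)
    have hbound : ∀ᶠ n in atTop, entropyOf T (μ n) (truncPart ξ m) ≤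
        ENNReal.ofReal (Real.log (1 + ε n) / ((r n + 1 : ℕ) : ℝ)
          + (KSAux.Hfin T (truncPart ξ m) m (μ 0) (r n + 1) / ((r n + 1 : ℕ) : ℝ))
            / (1 - ε n)) := by
      filter_upwards [hε.eventually_lt_const one_pos] with n hn1
      haveI := hprob n
      have hHle := KSAux.Hfin_le pd hT hpart.1 hpart.2.1 (KSAux.truncPart_eq ξ m) (μ 0) (μ n)
        (hinv 0) (hinv n) (hεpos n) hn1 (r n + 1) (hclose n)
      have h1 := KSAux.entropy_le_Hfin_div pd hT (μ n) (hinv n) (r n + 1) (Nat.succ_ne_zero _)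
      refine h1.trans (ENNReal.ofReal_le_ofReal ?_)
      have hKpos : (0:ℝ) < ((r n + 1 : ℕ) : ℝ) := by positivity
      calc KSAux.Hfin T (truncPart ξ m) m (μ n) (r n + 1) / ((r n + 1 : ℕ) : ℝ)
          ≤ (Real.log (1 + ε n)
              + KSAux.Hfin T (truncPart ξ m) m (μ 0) (r n + 1) / (1 - ε n))
              / ((r n + 1 : ℕ) : ℝ) := by
            exact div_le_div_of_nonneg_right hHle hKpos.le
        _ = _ := by ring
    have htend0 := KSAux.tendsto_Hfin_div pd hT (μ 0) (hinv 0)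
    have hrn : Tendsto (fun n => r n + 1) atTop atTop :=
      tendsto_atTop_mono (fun n => Nat.le_add_right (r n) 1) hr
    have h2 : Tendsto (fun n => KSAux.Hfin T (truncPart ξ m) m (μ 0) (r n + 1)
        / ((r n + 1 : ℕ) : ℝ)) atTop (nhds l0) := htend0.comp hrn
    have h3 : Tendsto (fun n => Real.log (1 + ε n)) atTop (nhds 0) := by
      have ha : Tendsto (fun n => 1 + ε n) atTop (nhds 1) := by
        simpa using tendsto_const_nhds.add hε
      have hb := (Real.continuousAt_log one_ne_zero).tendsto.comp ha
      simpa [Function.comp_def] using hb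
    have h3' : Tendsto (fun n => |Real.log (1 + ε n)|) atTop (nhds 0) := by
      simpa using h3.abs
    have h4 : Tendsto (fun n => Real.log (1 + ε n) / ((r n + 1 : ℕ) : ℝ)) atTop (nhds 0) := by
      refine squeeze_zero_norm (fun n => ?_) h3'
      rw [Real.norm_eq_abs, abs_div]
      refine div_le_self (abs_nonneg _) ?_
      rw [Nat.abs_cast]
      exact_mod_cast Nat.succ_le_succ (Nat.zero_le _)
    have h5 : Tendsto (fun n => 1 - ε n) atTop (nhds 1) := by
      simpa using tendsto_const_nhds.sub hε
    have hCtend : Tendsto (fun n => Real.log (1 + ε n) / ((r n + 1 : ℕ) : ℝ)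
        + (KSAux.Hfin T (truncPart ξ m) m (μ 0) (r n + 1) / ((r n + 1 : ℕ) : ℝ))
          / (1 - ε n)) atTop (nhds l0) := by
      have := h4.add (h2.div h5 one_ne_zero)
      simpa using this
    have hofR := (ENNReal.continuous_ofReal.tendsto _).comp hCtend
    have hlimsup : Filter.atTop.limsup (fun n => entropyOf T (μ n) (truncPart ξ m))
        ≤ ENNReal.ofReal l0 := by
      refine (Filter.limsup_le_limsup hbound).trans ?_
      exact le_of_eq hofR.limsup_eq
    refine hlimsup.trans ?_
    rw [← h0eq]
    refine le_iSup_of_le (truncPart ξ m) ?_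
    have hCP : IsCountablePartition (truncPart ξ m) := ⟨pd.meas, pd.disj, pd.cover⟩
    have hne : partEntropy (μ 0) (truncPart ξ m) ≠ ⊤ := KSAux.partEntropy_ne_top pd (μ 0)
    exact le_iSup₂_of_le hCP hne le_rfl
  refine hlim.trans ?_
  refine (Filter.limsup_le_limsup (Filter.Eventually.of_forall key)).trans ?_
  exact le_of_eq (Filter.limsup_const _)
end
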